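/- The limit φ is differentiable on B: there is a map σ from B to the continuous linear maps E → F such that φ has derivative σ(v) at each v ∈ B (derivative within B), and moreover: ‖φ(0)‖ ≤ a; ‖σ(v)‖ ≤ b for all v ∈ B; ‖σ(v) − σ(w)‖ ≤ H·‖v − w‖^θ for all v, w ∈ B; and the derivatives Dφₙ converge to σ uniformly on B. -/

import Mathlib

open Filter Topology

set_option maxHeartbeats 1000000

theorem stmt_3 {E F : Type*}
    [NormedAddCommGroup E] [NormedSpace ℝ E] [FiniteDimensional ℝ E]
    [NormedAddCommGroup F] [NormedSpace ℝ F] [FiniteDimensional ℝ F]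
    (Q : ℝ) (hQ : 0 < Q) (B : Set E) (hB : B = Metric.closedBall (0 : E) Q)
    (θ : ℝ) (hθ0 : 0 < θ) (hθ1 : θ ≤ 1)
    (a b H : ℝ) (ha : 0 ≤ a) (hb : 0 ≤ b) (hH : 0 ≤ H)
    (φ : ℕ → E → F) (Dφ : ℕ → E → (E →L[ℝ] F))
    (hdiff : ∀ n, ∀ v ∈ B, HasFDerivWithinAt (φ n) (Dφ n v) B v)
    (h0 : ∀ n, ‖φ n 0‖ ≤ a)
    (hbd : ∀ n, ∀ v ∈ B, ‖Dφ n v‖ ≤ b)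
    (hHol : ∀ n, ∀ v ∈ B, ∀ w ∈ B, ‖Dφ n v - Dφ n w‖ ≤ H * ‖v - w‖ ^ θ)
    (φlim : E → F) (hconv : TendstoUniformlyOn φ φlim atTop B) :
    ∃ σ : E → (E →L[ℝ] F),
      (∀ v ∈ B, HasFDerivWithinAt φlim (σ v) B v) ∧
      ‖φlim 0‖ ≤ a ∧
      (∀ v ∈ B, ‖σ v‖ ≤ b) ∧
      (∀ v ∈ B, ∀ w ∈ B, ‖σ v - σ w‖ ≤ H * ‖v - w‖ ^ θ) ∧
      TendstoUniformlyOn Dφ σ atTop B := by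
  have hBconv : Convex ℝ B := hB ▸ convex_closedBall (0 : E) Q
  have h0B : (0 : E) ∈ B := by rw [hB]; simp [hQ.le]
  -- the key quantitative estimate
  have key : ∀ (ε r : ℝ), 0 ≤ ε → 0 < r → r ≤ Q → ∀ m n : ℕ,
      (∀ v ∈ B, ‖φ m v - φ n v‖ ≤ ε) → ∀ v ∈ B,
      ‖Dφ m v - Dφ n v‖ ≤ 2 * ε / r + 4 * (H * r ^ θ) := by
    intro ε r hε hr hrQ m n hφmn v hv
    set h' : E → (E →L[ℝ] F) := fun u => Dφ m u - Dφ n u with hh'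
    have hHol2 : ∀ u ∈ B, ∀ w ∈ B, ‖h' u - h' w‖ ≤ 2 * (H * ‖u - w‖ ^ θ) := by
      intro u hu w hw
      have h1 := hHol m u hu w hw
      have h2 := hHol n u hu w hw
      calc ‖h' u - h' w‖ = ‖(Dφ m u - Dφ m w) - (Dφ n u - Dφ n w)‖ := by
            simp only [hh']; congr 1; abel
        _ ≤ ‖Dφ m u - Dφ m w‖ + ‖Dφ n u - Dφ n w‖ := norm_sub_le _ _
        _ ≤ 2 * (H * ‖u - w‖ ^ θ) := by linarith
    set y := (1 - r / Q) • v with hy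
    have hrQ' : 0 ≤ 1 - r / Q := by
      have : r / Q ≤ 1 := (div_le_one hQ).mpr hrQ
      linarith
    have hvQ : ‖v‖ ≤ Q := by rw [hB, Metric.mem_closedBall, dist_zero_right] at hv; exact hv
    have hball : ∀ z : E, ‖z‖ ≤ r → y + z ∈ B := by
      intro z hz
      rw [hB, Metric.mem_closedBall, dist_zero_right]
      have hyn : ‖y‖ = (1 - r / Q) * ‖v‖ := by
        rw [hy, norm_smul, Real.norm_of_nonneg hrQ']
      have h2 : (1 - r / Q) * ‖v‖ ≤ (1 - r / Q) * Q :=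
        mul_le_mul_of_nonneg_left hvQ hrQ'
      have h3 : (1 - r / Q) * Q = Q - r := by field_simp
      calc ‖y + z‖ ≤ ‖y‖ + ‖z‖ := norm_add_le _ _
        _ ≤ Q := by rw [hyn]; linarith
    have hyB : y ∈ B := by simpa using hball 0 (by simp [hr.le])
    have hrθ0 : (0:ℝ) ≤ H * r ^ θ := mul_nonneg hH (Real.rpow_nonneg hr.le θ)
    have hopy : ‖h' y‖ ≤ 2 * ε / r + 2 * (H * r ^ θ) := by
      refine ContinuousLinearMap.opNorm_le_bound _ (by positivity) fun z => ?_
      rcases eq_or_ne z 0 with rfl | hz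
      · simp
      · have hz0 : 0 < ‖z‖ := norm_pos_iff.mpr hz
        set z' := (r / ‖z‖) • z with hz'
        have hz'n : ‖z'‖ = r := by
          rw [hz', norm_smul, Real.norm_of_nonneg (by positivity)]
          field_simp
        have hy' : y + z' ∈ B := hball z' (le_of_eq hz'n)
        have hSB : segment ℝ y (y + z') ⊆ B := hBconv.segment_subset hyB hy'
        have hSnorm : ∀ u ∈ segment ℝ y (y + z'), ‖u - y‖ ≤ r := by
          intro u hu
          obtain ⟨p, q, hp, hq, hpq, rfl⟩ := hu
          have heq : p • y + q • (y + z') - y = q • z' := by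
            rw [smul_add, ← add_assoc, ← add_smul, hpq, one_smul]; abel
          rw [heq, norm_smul, Real.norm_of_nonneg hq, hz'n]
          nlinarith
        have hmvt := (convex_segment y (y + z')).norm_image_sub_le_of_norm_hasFDerivWithin_le'
            (f := fun u => φ m u - φ n u) (f' := h') (φ := h' y) (C := 2 * (H * r ^ θ))
            (fun u hu => ((hdiff m u (hSB hu)).sub (hdiff n u (hSB hu))).mono hSB)
            (fun u hu => by
              have h1 : ‖h' u - h' y‖ ≤ 2 * (H * ‖u - y‖ ^ θ) := hHol2 u (hSB hu) y hyB
              have h2 : ‖u - y‖ ^ θ ≤ r ^ θ :=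
                Real.rpow_le_rpow (norm_nonneg _) (hSnorm u hu) hθ0.le
              nlinarith)
            (left_mem_segment ℝ y (y + z')) (right_mem_segment ℝ y (y + z'))
        simp only [add_sub_cancel_left] at hmvt
        rw [hz'n] at hmvt
        set X := (φ m (y + z') - φ n (y + z')) - (φ m y - φ n y) with hX
        have hXb : ‖X‖ ≤ 2 * ε := by
          calc ‖X‖ ≤ ‖φ m (y + z') - φ n (y + z')‖ + ‖φ m y - φ n y‖ := norm_sub_le _ _
            _ ≤ ε + ε := add_le_add (hφmn _ hy') (hφmn _ hyB)
            _ = 2 * ε := by ring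
        have hXz : ‖h' y z'‖ ≤ 2 * ε + 2 * (H * r ^ θ) * r := by
          have h3 : ‖h' y z'‖ ≤ ‖X‖ + ‖X - h' y z'‖ := by
            have := norm_sub_le X (X - h' y z')
            simpa using this
          linarith [hmvt]
        have heqz : z = (‖z‖ / r) • z' := by
          rw [hz', smul_smul]
          rw [show ‖z‖ / r * (r / ‖z‖) = 1 by field_simp]
          rw [one_smul]
        calc ‖h' y z‖ = (‖z‖ / r) * ‖h' y z'‖ := by
              conv_lhs => rw [heqz]
              rw [map_smul, norm_smul, Real.norm_of_nonneg (by positivity)]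
          _ ≤ (‖z‖ / r) * (2 * ε + 2 * (H * r ^ θ) * r) :=
              mul_le_mul_of_nonneg_left hXz (by positivity)
          _ = (2 * ε / r + 2 * (H * r ^ θ)) * ‖z‖ := by field_simp
    have hvy : ‖v - y‖ ≤ r := by
      have heq : v - y = (r / Q) • v := by
        rw [hy, sub_smul, one_smul]; abel
      rw [heq, norm_smul, Real.norm_of_nonneg (by positivity)]
      calc r / Q * ‖v‖ ≤ r / Q * Q := mul_le_mul_of_nonneg_left hvQ (by positivity)
        _ = r := by field_simp
    have h2 : ‖v - y‖ ^ θ ≤ r ^ θ := Real.rpow_le_rpow (norm_nonneg _) hvy hθ0.le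
    show ‖h' v‖ ≤ _
    calc ‖h' v‖ = ‖(h' v - h' y) + h' y‖ := by rw [sub_add_cancel]
      _ ≤ ‖h' v - h' y‖ + ‖h' y‖ := norm_add_le _ _
      _ ≤ 2 * (H * ‖v - y‖ ^ θ) + (2 * ε / r + 2 * (H * r ^ θ)) :=
          add_le_add (hHol2 v hv y hyB) hopy
      _ ≤ 2 * ε / r + 4 * (H * r ^ θ) := by nlinarith
  -- uniform Cauchy of the derivatives
  have hcauchy : UniformCauchySeqOn Dφ atTop B := by
    rw [Metric.uniformCauchySeqOn_iff]
    intro ε hε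
    -- choose small r
    have hrt : Tendsto (fun r : ℝ => 4 * (H * r ^ θ)) (𝓝[>] 0) (𝓝 0) := by
      have hc : ContinuousAt (fun r : ℝ => r ^ θ) 0 :=
        Real.continuousAt_rpow_const 0 θ (Or.inr hθ0.le)
      have := (hc.tendsto.const_mul H).const_mul 4
      simp only [Real.zero_rpow hθ0.ne', mul_zero] at this
      exact this.mono_left nhdsWithin_le_nhds
    have h1 : ∀ᶠ r in 𝓝[>] (0:ℝ), 4 * (H * r ^ θ) < ε / 2 :=
      hrt.eventually_lt_const (by linarith)
    have h2 : ∀ᶠ r in 𝓝[>] (0:ℝ), r < Q := by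
      have : Tendsto (fun r : ℝ => r) (𝓝[>] 0) (𝓝 0) :=
        tendsto_id.mono_left nhdsWithin_le_nhds
      exact this.eventually_lt_const hQ
    have h3 : ∀ᶠ r in 𝓝[>] (0:ℝ), (0:ℝ) < r := eventually_mem_nhdsWithin
    obtain ⟨r, hr1, hr2, hr3⟩ := (h1.and (h2.and h3)).exists
    have hr : 0 < r := hr3
    have hφc := hconv.uniformCauchySeqOn
    rw [Metric.uniformCauchySeqOn_iff] at hφc
    obtain ⟨N, hN⟩ := hφc (ε * r / 8) (by positivity)
    refine ⟨N, fun m hm n hn v hv => ?_⟩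
    have hb' : ∀ w ∈ B, ‖φ m w - φ n w‖ ≤ ε * r / 8 := by
      intro w hw
      have := hN m hm n hn w hw
      rw [dist_eq_norm] at this
      exact this.le
    have := key (ε * r / 8) r (by positivity) hr hr2.le m n hb' v hv
    rw [dist_eq_norm]
    have hcalc : 2 * (ε * r / 8) / r = ε / 4 := by field_simp; ring
    rw [hcalc] at this
    linarith
  -- pointwise limits
  have hpt : ∀ v : E, ∃ L : E →L[ℝ] F, v ∈ B → Tendsto (fun n => Dφ n v) atTop (𝓝 L) := by
    intro v
    by_cases hv : v ∈ B
    · obtain ⟨L, hL⟩ := cauchySeq_tendsto_of_complete (hcauchy.cauchySeq hv)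
      exact ⟨L, fun _ => hL⟩
    · exact ⟨0, fun h => absurd h hv⟩
  choose σ hσ using hpt
  refine ⟨σ, ?_, ?_, ?_, ?_, ?_⟩
  · -- differentiability
    intro v hv
    have hineq : ∀ w ∈ B, ‖φlim w - φlim v - σ v (w - v)‖ ≤ H * ‖w - v‖ ^ θ * ‖w - v‖ := by
      intro w hw
      have hseg : segment ℝ v w ⊆ B := hBconv.segment_subset hv hw
      have hn : ∀ n, ‖φ n w - φ n v - Dφ n v (w - v)‖ ≤ H * ‖w - v‖ ^ θ * ‖w - v‖ := by
        intro n
        refine (convex_segment v w).norm_image_sub_le_of_norm_hasFDerivWithin_le'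
            (f := φ n) (f' := fun u => Dφ n u) (φ := Dφ n v) (C := H * ‖w - v‖ ^ θ)
            (fun u hu => (hdiff n u (hseg hu)).mono hseg)
            (fun u hu => ?_)
            (left_mem_segment ℝ v w) (right_mem_segment ℝ v w)
        have h1 := hHol n u (hseg hu) v hv
        have h2 : ‖u - v‖ ≤ ‖w - v‖ := by
          obtain ⟨p, q, hp, hq, hpq, rfl⟩ := hu
          have heq : p • v + q • w - v = q • (w - v) := by
            have hv1 : v = (p + q) • v := by rw [hpq, one_smul]
            calc p • v + q • w - v = p • v + q • w - (p + q) • v := by rw [← hv1]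
              _ = q • (w - v) := by module
          rw [heq, norm_smul, Real.norm_of_nonneg hq]
          nlinarith [norm_nonneg (w - v)]
        have h3 : ‖u - v‖ ^ θ ≤ ‖w - v‖ ^ θ :=
          Real.rpow_le_rpow (norm_nonneg _) h2 hθ0.le
        exact h1.trans (mul_le_mul_of_nonneg_left h3 hH)
      have htend : Tendsto (fun n => φ n w - φ n v - Dφ n v (w - v)) atTop
          (𝓝 (φlim w - φlim v - σ v (w - v))) := by
        have ht1 := (hconv.tendsto_at hw).sub (hconv.tendsto_at hv)
        have ht2 : Tendsto (fun n => Dφ n v (w - v)) atTop (𝓝 (σ v (w - v))) := by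
          have hc := (ContinuousLinearMap.apply ℝ F (w - v)).continuous.tendsto (σ v)
          exact hc.comp (hσ v hv)
        exact ht1.sub ht2
      exact le_of_tendsto htend.norm (Eventually.of_forall hn)
    refine HasFDerivWithinAt.of_isLittleO ?_
    rw [Asymptotics.isLittleO_iff]
    intro c hc
    have h1 : Tendsto (fun w : E => H * ‖w - v‖ ^ θ) (𝓝[B] v) (𝓝 0) := by
      have hn : Tendsto (fun w : E => ‖w - v‖) (𝓝 v) (𝓝 0) := by
        have hcont : Continuous (fun w : E => ‖w - v‖) :=
          (continuous_id.sub continuous_const).norm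
        have := hcont.tendsto v
        simpa using this
      have hc' : ContinuousAt (fun r : ℝ => r ^ θ) 0 :=
        Real.continuousAt_rpow_const 0 θ (Or.inr hθ0.le)
      have h2 := (hc'.tendsto.comp hn).const_mul H
      simp only [Real.zero_rpow hθ0.ne', mul_zero] at h2
      exact (h2.mono_left nhdsWithin_le_nhds : _)
    have h2 : ∀ᶠ w in 𝓝[B] v, H * ‖w - v‖ ^ θ ≤ c := by
      filter_upwards [h1.eventually_lt_const hc] with w hw using hw.le
    filter_upwards [h2, eventually_mem_nhdsWithin] with w hw hwB
    calc ‖φlim w - φlim v - σ v (w - v)‖ ≤ H * ‖w - v‖ ^ θ * ‖w - v‖ := hineq w hwB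
      _ ≤ c * ‖w - v‖ := mul_le_mul_of_nonneg_right hw (norm_nonneg _)
  · exact le_of_tendsto (hconv.tendsto_at h0B).norm (Eventually.of_forall h0)
  · intro v hv
    exact le_of_tendsto (hσ v hv).norm (Eventually.of_forall fun n => hbd n v hv)
  · intro v hv w hw
    exact le_of_tendsto ((hσ v hv).sub (hσ w hw)).norm
      (Eventually.of_forall fun n => hHol n v hv w hw)
  · exact hcauchy.tendstoUniformlyOn_of_tendsto fun v hv => hσ v hv
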